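/- Let R be a left-symmetric conformal algebra, Q a ℂ[∂]-module, and E = R ⊕ Q the direct sum of ℂ[∂]-modules. Suppose E carries a left-symmetric conformal algebra structure whose restriction to R coincides with the λ-product of R, and such that R is a two-sided ideal of E (i.e. a_λ e ∈ R[λ] and e_λ a ∈ R[λ] for all a ∈ R and e ∈ E). Then there exists a left-symmetric conformal extending structure Ω(R,Q) = (φ, ψ, g_λ(·,·), ∘_λ) of R by Q with l and r trivial, and an isomorphism of left-symmetric conformal algebras from E to the crossed product R♮^g_{φ,ψ}Q which stabilizes R and co-stabilizes Q. -/

import Mathlib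

open Finsupp Polynomial

noncomputable section

/-- One-variable conformal polynomials in λ with coefficients in `W`:
the coefficient of `λ^n` sits at index `n`. -/
abbrev OP (W : Type*) [Zero W] := ℕ →₀ W

/-- Two-variable conformal polynomials in λ, μ with coefficients in `W`. -/
abbrev TP (W : Type*) [Zero W] := (ℕ × ℕ) →₀ W

section Defs

variable {U V W L : Type*}
variable [AddCommGroup U] [Module ℂ U] [AddCommGroup V] [Module ℂ V]
variable [AddCommGroup W] [Module ℂ W] [AddCommGroup L] [Module ℂ L]

/-- Multiplication by the variable λ on one-variable polynomials. -/
def lsh : OP W →ₗ[ℂ] OP W := Finsupp.lmapDomain W ℂ (· + 1)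

/-- Multiplication by λ on two-variable polynomials. -/
def LX : TP W →ₗ[ℂ] TP W := Finsupp.lmapDomain W ℂ (fun p => (p.1 + 1, p.2))

/-- Multiplication by μ on two-variable polynomials. -/
def LY : TP W →ₗ[ℂ] TP W := Finsupp.lmapDomain W ℂ (fun p => (p.1, p.2 + 1))

/-- Coefficientwise action of ∂ on one-variable polynomials. -/
def pD (dW : W →ₗ[ℂ] W) : OP W →ₗ[ℂ] OP W := Finsupp.mapRange.linearMap dW

/-- Coefficientwise action of ∂ on two-variable polynomials. -/
def PD (dW : W →ₗ[ℂ] W) : TP W →ₗ[ℂ] TP W := Finsupp.mapRange.linearMap dW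

/-- The operator −λ−∂ on one-variable polynomials. -/
def nD (dW : W →ₗ[ℂ] W) : OP W →ₗ[ℂ] OP W := -lsh - pD dW

/-- The operator −λ−∂ on two-variable polynomials. -/
def nX (dW : W →ₗ[ℂ] W) : TP W →ₗ[ℂ] TP W := -LX - PD dW

/-- The operator −μ−∂ on two-variable polynomials. -/
def nY (dW : W →ₗ[ℂ] W) : TP W →ₗ[ℂ] TP W := -LY - PD dW

/-- The operator −λ−μ−∂ on two-variable polynomials. -/
def nXY (dW : W →ₗ[ℂ] W) : TP W →ₗ[ℂ] TP W := -LX - LY - PD dW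

/-- Substitution of a (commuting) operator `A` for the variable of a one-variable
polynomial, with values in two-variable polynomials. -/
def evA (A : TP W →ₗ[ℂ] TP W) : OP W →ₗ[ℂ] TP W :=
  Finsupp.lsum ℂ (fun k => (A ^ k) ∘ₗ Finsupp.lsingle ((0, 0) : ℕ × ℕ))

/-- Substitution of an operator `A` for the variable of a one-variable polynomial. -/
def evA1 (A : OP W →ₗ[ℂ] OP W) : OP W →ₗ[ℂ] OP W :=
  Finsupp.lsum ℂ (fun k => (A ^ k) ∘ₗ Finsupp.lsingle (0 : ℕ))

/-- `u_A v`: the pairing `m` evaluated with the variable replaced by the operator `A`. -/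
def ev2 (m : U →ₗ[ℂ] V →ₗ[ℂ] OP W) (A : TP W →ₗ[ℂ] TP W) (u : U) (v : V) : TP W :=
  evA A (m u v)

/-- Extension of the pairing `m`, in its first argument, to two-variable polynomials. -/
def exL (m : U →ₗ[ℂ] V →ₗ[ℂ] OP W) (A : TP W →ₗ[ℂ] TP W) (p : TP U) (v : V) : TP W :=
  Finsupp.sum p fun ij u => (LX ^ ij.1) ((LY ^ ij.2) (evA A (m u v)))

/-- Extension of the pairing `m`, in its second argument, to two-variable polynomials. -/
def exR (m : U →ₗ[ℂ] V →ₗ[ℂ] OP W) (A : TP W →ₗ[ℂ] TP W) (u : U) (p : TP V) : TP W :=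
  Finsupp.sum p fun ij v => (LX ^ ij.1) ((LY ^ ij.2) (evA A (m u v)))

/-- Extension of a unary conformal-linear map to two-variable polynomials. -/
def exU (D : U →ₗ[ℂ] OP W) (A : TP W →ₗ[ℂ] TP W) (p : TP U) : TP W :=
  Finsupp.sum p fun ij u => (LX ^ ij.1) ((LY ^ ij.2) (evA A (D u)))

/-- Coefficientwise application of a linear map to a one-variable polynomial. -/
def pMap (f : U →ₗ[ℂ] W) : OP U →ₗ[ℂ] OP W := Finsupp.mapRange.linearMap f

/-- A conformal bilinear map: `f(∂u, v) = −λ f(u,v)` and `f(u, ∂v) = (λ+∂) f(u,v)`. -/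
structure ConfBilin (dU : U →ₗ[ℂ] U) (dV : V →ₗ[ℂ] V) (dW : W →ₗ[ℂ] W)
    (m : U →ₗ[ℂ] V →ₗ[ℂ] OP W) : Prop where
  dleft : ∀ u v, m (dU u) v = -lsh (m u v)
  dright : ∀ u v, m u (dV v) = lsh (m u v) + pD dW (m u v)

/-- A left-symmetric conformal algebra structure on the ℂ[∂]-module `(L, dL)`. -/
structure IsLSCA (dL : L →ₗ[ℂ] L) (m : L →ₗ[ℂ] L →ₗ[ℂ] OP L) : Prop where
  conf : ConfBilin dL dL dL m
  lsym : ∀ a b c : L,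
    exL m (LX + LY) (ev2 m LX a b) c - exR m LX a (ev2 m LY b c)
      = exL m (LX + LY) (ev2 m LY b a) c - exR m LY b (ev2 m LX a c)

/-- The commutator λ-bracket `[u_λ v] = u_λ v − v_{−λ−∂} u`. -/
def commut (dL : L →ₗ[ℂ] L) (m : L →ₗ[ℂ] L →ₗ[ℂ] OP L) : L →ₗ[ℂ] L →ₗ[ℂ] OP L :=
  m - (m.compr₂ (evA1 (nD dL))).flip

/-- A Lie conformal algebra structure on the ℂ[∂]-module `(L, dL)`. -/
structure IsLieCA (dL : L →ₗ[ℂ] L) (br : L →ₗ[ℂ] L →ₗ[ℂ] OP L) : Prop where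
  dleft : ∀ u v, br (dL u) v = -lsh (br u v)
  dright : ∀ u v, br u (dL v) = lsh (br u v) + pD dL (br u v)
  skew : ∀ u v, br u v = -evA1 (nD dL) (br v u)
  jacobi : ∀ a b c : L,
    exR br LX a (ev2 br LY b c)
      = exL br (LX + LY) (ev2 br LX a b) c + exR br LY b (ev2 br LX a c)

end Defs

section Ext

variable {R Q : Type*} [AddCommGroup R] [Module ℂ R] [AddCommGroup Q] [Module ℂ Q]

/-- An extending datum of a left-symmetric conformal algebra `R` by a ℂ[∂]-module `Q`. -/
structure ExtDatum (dR : R →ₗ[ℂ] R) (dQ : Q →ₗ[ℂ] Q) where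
  phi : Q →ₗ[ℂ] R →ₗ[ℂ] OP R
  psi : Q →ₗ[ℂ] R →ₗ[ℂ] OP R
  l : R →ₗ[ℂ] Q →ₗ[ℂ] OP Q
  r : R →ₗ[ℂ] Q →ₗ[ℂ] OP Q
  g : Q →ₗ[ℂ] Q →ₗ[ℂ] OP R
  o : Q →ₗ[ℂ] Q →ₗ[ℂ] OP Q
  hphi : ConfBilin dQ dR dR phi
  hpsi : ConfBilin dQ dR dR psi
  hl : ConfBilin dR dQ dQ l
  hr : ConfBilin dR dQ dQ r
  hg : ConfBilin dQ dQ dR g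
  ho : ConfBilin dQ dQ dQ o

/-- Embedding of `R`-valued polynomials into `(R ⊕ Q)`-valued polynomials. -/
def inlP (R Q : Type*) [AddCommGroup R] [Module ℂ R] [AddCommGroup Q] [Module ℂ Q] :
    OP R →ₗ[ℂ] OP (R × Q) := Finsupp.mapRange.linearMap (LinearMap.inl ℂ R Q)

/-- Embedding of `Q`-valued polynomials into `(R ⊕ Q)`-valued polynomials. -/
def inrP (R Q : Type*) [AddCommGroup R] [Module ℂ R] [AddCommGroup Q] [Module ℂ Q] :
    OP Q →ₗ[ℂ] OP (R × Q) := Finsupp.mapRange.linearMap (LinearMap.inr ℂ R Q)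

/-- The λ-product of the unified product `R ♮ Q`:
`(a+x) _λ (b+y) = (a_λ b + φ(x)_λ b + ψ(y)_{−λ−∂} a + g_λ(x,y)) + (x∘_λ y + l(a)_λ y + r(b)_{−λ−∂} x)`. -/
def uprod (dR : R →ₗ[ℂ] R) (dQ : Q →ₗ[ℂ] Q) (Ω : ExtDatum dR dQ)
    (m : R →ₗ[ℂ] R →ₗ[ℂ] OP R) :
    (R × Q) →ₗ[ℂ] (R × Q) →ₗ[ℂ] OP (R × Q) :=
  ((m.compl₁₂ (LinearMap.fst ℂ R Q) (LinearMap.fst ℂ R Q)).compr₂ (inlP R Q))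
    + ((Ω.phi.compl₁₂ (LinearMap.snd ℂ R Q) (LinearMap.fst ℂ R Q)).compr₂ (inlP R Q))
    + (((Ω.psi.compl₁₂ (LinearMap.snd ℂ R Q) (LinearMap.fst ℂ R Q)).compr₂
        (inlP R Q ∘ₗ evA1 (nD dR))).flip)
    + ((Ω.g.compl₁₂ (LinearMap.snd ℂ R Q) (LinearMap.snd ℂ R Q)).compr₂ (inlP R Q))
    + ((Ω.o.compl₁₂ (LinearMap.snd ℂ R Q) (LinearMap.snd ℂ R Q)).compr₂ (inrP R Q))
    + ((Ω.l.compl₁₂ (LinearMap.fst ℂ R Q) (LinearMap.snd ℂ R Q)).compr₂ (inrP R Q))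
    + (((Ω.r.compl₁₂ (LinearMap.fst ℂ R Q) (LinearMap.snd ℂ R Q)).compr₂
        (inrP R Q ∘ₗ evA1 (nD dQ))).flip)

lemma uprod_apply (dR : R →ₗ[ℂ] R) (dQ : Q →ₗ[ℂ] Q) (Ω : ExtDatum dR dQ)
    (m : R →ₗ[ℂ] R →ₗ[ℂ] OP R) (e₁ e₂ : R × Q) :
    uprod dR dQ Ω m e₁ e₂ =
      inlP R Q (m e₁.1 e₂.1 + Ω.phi e₁.2 e₂.1 + evA1 (nD dR) (Ω.psi e₂.2 e₁.1) + Ω.g e₁.2 e₂.2)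
      + inrP R Q (Ω.o e₁.2 e₂.2 + Ω.l e₁.1 e₂.2 + evA1 (nD dQ) (Ω.r e₂.1 e₁.2)) := by
  simp [uprod, LinearMap.add_apply, LinearMap.compr₂_apply, LinearMap.compl₁₂_apply,
    LinearMap.flip_apply, map_add, LinearMap.comp_apply]
  abel

lemma uprod_res (dR : R →ₗ[ℂ] R) (dQ : Q →ₗ[ℂ] Q) (Ω : ExtDatum dR dQ)
    (m : R →ₗ[ℂ] R →ₗ[ℂ] OP R) (a b : R) :
    uprod dR dQ Ω m (a, (0 : Q)) (b, 0) = inlP R Q (m a b) := by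
  rw [uprod_apply]
  simp

/-- Isomorphism property of left-symmetric conformal algebra structures, via
a ℂ[∂]-module automorphism `T` of the underlying module `E`. -/
structure IsIsoLSCA {E : Type*} [AddCommGroup E] [Module ℂ E] (dE : E →ₗ[ℂ] E)
    (m₁ m₂ : E →ₗ[ℂ] E →ₗ[ℂ] OP E) (T : E ≃ₗ[ℂ] E) : Prop where
  dcomm : ∀ e, T (dE e) = dE (T e)
  mult : ∀ u v, m₂ (T u) (T v) = pMap (T : E →ₗ[ℂ] E) (m₁ u v)

/-- `T` stabilizes `R`, i.e. `T ∘ i = i` for the inclusion `i : R → R ⊕ Q`. -/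
def Stab (T : (R × Q) ≃ₗ[ℂ] (R × Q)) : Prop := ∀ a : R, T (a, 0) = (a, 0)

/-- `T` co-stabilizes `Q`, i.e. `π ∘ T = π` for the projection `π : R ⊕ Q → Q`. -/
def Costab (T : (R × Q) ≃ₗ[ℂ] (R × Q)) : Prop := ∀ e, (T e).2 = e.2

end Ext

section Helpers

variable {U W : Type*} [AddCommGroup U] [Module ℂ U] [AddCommGroup W] [Module ℂ W]

@[simp] lemma lsh_single (k : ℕ) (a : W) :
    lsh (Finsupp.single k a) = Finsupp.single (k+1) a := by
  simp [lsh]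

@[simp] lemma pD_single (d : W →ₗ[ℂ] W) (k : ℕ) (a : W) :
    pD d (Finsupp.single k a) = Finsupp.single k (d a) := by
  simp [pD]

@[simp] lemma pMap_single (f : U →ₗ[ℂ] W) (k : ℕ) (a : U) :
    pMap f (Finsupp.single k a) = Finsupp.single k (f a) := by
  simp [pMap]

@[simp] lemma evA1_single (A : OP W →ₗ[ℂ] OP W) (k : ℕ) (a : W) :
    evA1 A (Finsupp.single k a) = (A ^ k) (Finsupp.single 0 a) := by
  simp [evA1]

lemma pD_lsh (d : W →ₗ[ℂ] W) (p : OP W) : pD d (lsh p) = lsh (pD d p) := by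
  induction p using Finsupp.induction_linear with
  | zero => simp
  | add p q hp hq => simp [hp, hq]
  | single k a => simp

lemma nD_pD (d : W →ₗ[ℂ] W) (p : OP W) : nD d (pD d p) = pD d (nD d p) := by
  simp [nD, pD_lsh, map_neg, map_sub]

lemma nD_pow_pD (d : W →ₗ[ℂ] W) (k : ℕ) (p : OP W) :
    ((nD d) ^ k) (pD d p) = pD d (((nD d) ^ k) p) := by
  induction k with
  | zero => simp
  | succ n ih => rw [pow_succ', Module.End.mul_apply, Module.End.mul_apply, ih, nD_pD]

lemma evA1_lsh (A : OP W →ₗ[ℂ] OP W) (p : OP W) : evA1 A (lsh p) = A (evA1 A p) := by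
  induction p using Finsupp.induction_linear with
  | zero => simp
  | add p q hp hq => simp [hp, hq]
  | single k a => simp [pow_succ', Module.End.mul_apply]

lemma evA1_pD (d : W →ₗ[ℂ] W) (p : OP W) :
    evA1 (nD d) (pD d p) = pD d (evA1 (nD d) p) := by
  induction p using Finsupp.induction_linear with
  | zero => simp
  | add p q hp hq => simp [hp, hq]
  | single k a =>
      have : Finsupp.single k (d a) = pD d (Finsupp.single k a) := by simp
      simp only [pD_single, evA1_single]
      rw [show (Finsupp.single (0:ℕ) (d a)) = pD d (Finsupp.single 0 a) by simp,
        nD_pow_pD]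

lemma nD_apply (d : W →ₗ[ℂ] W) (p : OP W) : nD d p = -lsh p - pD d p := by
  simp [nD]

lemma evA1_nD (d : W →ₗ[ℂ] W) (p : OP W) :
    evA1 (nD d) (nD d p) = lsh (evA1 (nD d) p) := by
  rw [nD_apply, map_sub, map_neg, evA1_lsh, evA1_pD, nD_apply]
  abel

lemma evA1_invol (d : W →ₗ[ℂ] W) (p : OP W) :
    evA1 (nD d) (evA1 (nD d) p) = p := by
  induction p using Finsupp.induction_linear with
  | zero => simp
  | add p q hp hq => simp [hp, hq]
  | single k a =>
      rw [evA1_single]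
      induction k with
      | zero => simp
      | succ n ih =>
          rw [pow_succ', Module.End.mul_apply, evA1_nD, ih, lsh_single]

lemma pMap_lsh (f : U →ₗ[ℂ] W) (p : OP U) : pMap f (lsh p) = lsh (pMap f p) := by
  induction p using Finsupp.induction_linear with
  | zero => simp
  | add p q hp hq => simp [hp, hq]
  | single k a => simp

lemma pMap_pD (f : U →ₗ[ℂ] W) (dU : U →ₗ[ℂ] U) (dW : W →ₗ[ℂ] W)
    (h : ∀ u, f (dU u) = dW (f u)) (p : OP U) :
    pMap f (pD dU p) = pD dW (pMap f p) := by
  induction p using Finsupp.induction_linear with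
  | zero => simp
  | add p q hp hq => simp [hp, hq]
  | single k a => simp [h]

end Helpers

section Decomp

variable {R Q : Type*} [AddCommGroup R] [Module ℂ R] [AddCommGroup Q] [Module ℂ Q]

lemma decompP (p : OP (R × Q)) :
    inlP R Q (pMap (LinearMap.fst ℂ R Q) p) + inrP R Q (pMap (LinearMap.snd ℂ R Q) p) = p := by
  refine Finsupp.ext fun n => ?_
  rw [Finsupp.add_apply]
  simp [inlP, inrP, pMap, Finsupp.mapRange.linearMap_apply, Finsupp.mapRange_apply]

lemma decompP_left (p : OP (R × Q)) (h : pMap (LinearMap.snd ℂ R Q) p = 0) :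
    p = inlP R Q (pMap (LinearMap.fst ℂ R Q) p) := by
  conv_lhs => rw [← decompP p]
  rw [h, map_zero, add_zero]

end Decomp

/-- **Proposition 5.1.**  Let `R` and `Q` be two left-symmetric conformal algebras and
`E = R ⊕ Q`.  If `E` carries a left-symmetric conformal algebra structure restricting to
that of `R` and such that `R` is a (two-sided) ideal of `E`, then `E` is isomorphic to a
crossed product `R ♮^g_{φ,ψ} Q` (a unified product with `l` and `r` trivial), by an
isomorphism which stabilizes `R` and co-stabilizes `Q`. -/
theorem E_iso_crossed_product
    {R Q : Type*} [AddCommGroup R] [Module ℂ R] [AddCommGroup Q] [Module ℂ Q]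
    (dR : R →ₗ[ℂ] R) (dQ : Q →ₗ[ℂ] Q)
    (m : R →ₗ[ℂ] R →ₗ[ℂ] OP R) (hm : IsLSCA dR m)
    (mE : (R × Q) →ₗ[ℂ] (R × Q) →ₗ[ℂ] OP (R × Q))
    (hE : IsLSCA (dR.prodMap dQ) mE)
    (hsub : ∀ a b : R, mE (a, 0) (b, 0) = inlP R Q (m a b))
    -- `R` is a two-sided ideal: the `Q`-components of `a_λ e` and of `e_λ a` vanish
    (hidl : ∀ (a : R) (e : R × Q),
      Finsupp.mapRange.linearMap (LinearMap.snd ℂ R Q) (mE (a, 0) e) = 0)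
    (hidr : ∀ (a : R) (e : R × Q),
      Finsupp.mapRange.linearMap (LinearMap.snd ℂ R Q) (mE e (a, 0)) = 0) :
    ∃ Ω : ExtDatum dR dQ, Ω.l = 0 ∧ Ω.r = 0 ∧
      IsLSCA (dR.prodMap dQ) (uprod dR dQ Ω m) ∧
      ∃ T : (R × Q) ≃ₗ[ℂ] (R × Q),
        IsIsoLSCA (dR.prodMap dQ) mE (uprod dR dQ Ω m) T ∧ Stab T ∧ Costab T := by
  have hfst : ∀ e : R × Q,
      (LinearMap.fst ℂ R Q) ((dR.prodMap dQ) e) = dR ((LinearMap.fst ℂ R Q) e) := fun _ => rfl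
  have hsnd : ∀ e : R × Q,
      (LinearMap.snd ℂ R Q) ((dR.prodMap dQ) e) = dQ ((LinearMap.snd ℂ R Q) e) := fun _ => rfl
  have hφ : ConfBilin dQ dR dR
      ((mE.compl₁₂ (LinearMap.inr ℂ R Q) (LinearMap.inl ℂ R Q)).compr₂
        (pMap (LinearMap.fst ℂ R Q))) := by
    constructor
    · intro x b
      simp only [LinearMap.compr₂_apply, LinearMap.compl₁₂_apply, LinearMap.inr_apply,
        LinearMap.inl_apply]
      rw [show ((0 : R), dQ x) = (dR.prodMap dQ) ((0 : R), x) from by simp,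
        hE.conf.dleft, map_neg, pMap_lsh]
    · intro x b
      simp only [LinearMap.compr₂_apply, LinearMap.compl₁₂_apply, LinearMap.inr_apply,
        LinearMap.inl_apply]
      rw [show ((dR b, (0 : Q)) : R × Q) = (dR.prodMap dQ) (b, (0 : Q)) from by simp,
        hE.conf.dright, map_add, pMap_lsh, pMap_pD _ (dR.prodMap dQ) dR hfst]
  have hψ : ConfBilin dQ dR dR
      (((mE.compl₁₂ (LinearMap.inl ℂ R Q) (LinearMap.inr ℂ R Q)).compr₂
        ((evA1 (nD dR)) ∘ₗ pMap (LinearMap.fst ℂ R Q))).flip) := by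
    constructor
    · intro y a
      simp only [LinearMap.flip_apply, LinearMap.compr₂_apply, LinearMap.compl₁₂_apply,
        LinearMap.inr_apply, LinearMap.inl_apply, LinearMap.coe_comp, Function.comp_apply]
      rw [show ((0 : R), dQ y) = (dR.prodMap dQ) ((0 : R), y) from by simp,
        hE.conf.dright, map_add, pMap_lsh, pMap_pD _ (dR.prodMap dQ) dR hfst, map_add,
        evA1_lsh, evA1_pD, nD_apply]
      abel
    · intro y a
      simp only [LinearMap.flip_apply, LinearMap.compr₂_apply, LinearMap.compl₁₂_apply,
        LinearMap.inr_apply, LinearMap.inl_apply, LinearMap.coe_comp, Function.comp_apply]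
      rw [show ((dR a, (0 : Q)) : R × Q) = (dR.prodMap dQ) (a, (0 : Q)) from by simp,
        hE.conf.dleft, map_neg, pMap_lsh, map_neg, evA1_lsh, nD_apply]
      abel
  have hg : ConfBilin dQ dQ dR
      ((mE.compl₁₂ (LinearMap.inr ℂ R Q) (LinearMap.inr ℂ R Q)).compr₂
        (pMap (LinearMap.fst ℂ R Q))) := by
    constructor
    · intro x y
      simp only [LinearMap.compr₂_apply, LinearMap.compl₁₂_apply, LinearMap.inr_apply]
      rw [show ((0 : R), dQ x) = (dR.prodMap dQ) ((0 : R), x) from by simp,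
        hE.conf.dleft, map_neg, pMap_lsh]
    · intro x y
      simp only [LinearMap.compr₂_apply, LinearMap.compl₁₂_apply, LinearMap.inr_apply]
      rw [show ((0 : R), dQ y) = (dR.prodMap dQ) ((0 : R), y) from by simp,
        hE.conf.dright, map_add, pMap_lsh, pMap_pD _ (dR.prodMap dQ) dR hfst]
  have ho : ConfBilin dQ dQ dQ
      ((mE.compl₁₂ (LinearMap.inr ℂ R Q) (LinearMap.inr ℂ R Q)).compr₂
        (pMap (LinearMap.snd ℂ R Q))) := by
    constructor
    · intro x y
      simp only [LinearMap.compr₂_apply, LinearMap.compl₁₂_apply, LinearMap.inr_apply]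
      rw [show ((0 : R), dQ x) = (dR.prodMap dQ) ((0 : R), x) from by simp,
        hE.conf.dleft, map_neg, pMap_lsh]
    · intro x y
      simp only [LinearMap.compr₂_apply, LinearMap.compl₁₂_apply, LinearMap.inr_apply]
      rw [show ((0 : R), dQ y) = (dR.prodMap dQ) ((0 : R), y) from by simp,
        hE.conf.dright, map_add, pMap_lsh, pMap_pD _ (dR.prodMap dQ) dQ hsnd]
  have hl0 : ConfBilin dR dQ dQ (0 : R →ₗ[ℂ] Q →ₗ[ℂ] OP Q) := by
    constructor <;> intro u v <;> simp
  have hkey : ∀ Ω : ExtDatum dR dQ,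
      Ω.phi = (mE.compl₁₂ (LinearMap.inr ℂ R Q) (LinearMap.inl ℂ R Q)).compr₂
        (pMap (LinearMap.fst ℂ R Q)) →
      Ω.psi = ((mE.compl₁₂ (LinearMap.inl ℂ R Q) (LinearMap.inr ℂ R Q)).compr₂
        ((evA1 (nD dR)) ∘ₗ pMap (LinearMap.fst ℂ R Q))).flip →
      Ω.l = 0 → Ω.r = 0 →
      Ω.g = (mE.compl₁₂ (LinearMap.inr ℂ R Q) (LinearMap.inr ℂ R Q)).compr₂
        (pMap (LinearMap.fst ℂ R Q)) →
      Ω.o = (mE.compl₁₂ (LinearMap.inr ℂ R Q) (LinearMap.inr ℂ R Q)).compr₂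
        (pMap (LinearMap.snd ℂ R Q)) →
      uprod dR dQ Ω m = mE := by
    intro Ω h1 h2 h3 h4 h5 h6
    apply LinearMap.ext; intro e₁; apply LinearMap.ext; intro e₂
    obtain ⟨a, x⟩ := e₁; obtain ⟨b, y⟩ := e₂
    rw [uprod_apply, h1, h2, h3, h4, h5, h6]
    simp only [LinearMap.compr₂_apply, LinearMap.compl₁₂_apply, LinearMap.flip_apply,
      LinearMap.inr_apply, LinearMap.inl_apply, LinearMap.coe_comp, Function.comp_apply,
      LinearMap.zero_apply, map_zero, add_zero]
    rw [evA1_invol]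
    simp only [map_add]
    conv_rhs => rw [show ((a, x) : R × Q) = (a, (0:Q)) + ((0:R), x) from by simp,
      show ((b, y) : R × Q) = (b, (0:Q)) + ((0:R), y) from by simp]
    simp only [map_add, LinearMap.add_apply]
    conv_rhs => rw [hsub a b,
      decompP_left (mE ((0:R), x) (b, (0:Q))) (hidr b ((0:R), x)),
      decompP_left (mE (a, (0:Q)) ((0:R), y)) (hidl a ((0:R), y)),
      ← decompP (mE ((0:R), x) ((0:R), y))]
    abel
  refine ⟨⟨(mE.compl₁₂ (LinearMap.inr ℂ R Q) (LinearMap.inl ℂ R Q)).compr₂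
        (pMap (LinearMap.fst ℂ R Q)),
      ((mE.compl₁₂ (LinearMap.inl ℂ R Q) (LinearMap.inr ℂ R Q)).compr₂
        ((evA1 (nD dR)) ∘ₗ pMap (LinearMap.fst ℂ R Q))).flip,
      0, 0,
      (mE.compl₁₂ (LinearMap.inr ℂ R Q) (LinearMap.inr ℂ R Q)).compr₂
        (pMap (LinearMap.fst ℂ R Q)),
      (mE.compl₁₂ (LinearMap.inr ℂ R Q) (LinearMap.inr ℂ R Q)).compr₂
        (pMap (LinearMap.snd ℂ R Q)),
      hφ, hψ, hl0, hl0, hg, ho⟩, rfl, rfl, ?_, ?_⟩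
  · rw [hkey _ rfl rfl rfl rfl rfl rfl]; exact hE
  · refine ⟨LinearEquiv.refl ℂ (R × Q), ⟨fun e => rfl, ?_⟩, fun a => rfl, fun e => rfl⟩
    intro u v
    rw [hkey _ rfl rfl rfl rfl rfl rfl]
    simp [pMap, Finsupp.mapRange.linearMap_id]
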